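/- For a finitely generated module M, the following are equivalent: (1) M is δ-supplemented; (2) every maximal submodule of M has a δ-supplement in M; (3) M = H₁ + H₂ + ⋯ + Hₙ where each Hᵢ is either simple or δ-local. -/

import Mathlib

open Submodule

section Defs

universe u v

variable (R : Type u) [Ring R]

/-- A submodule `L` is essential in `M` if it intersects every nonzero submodule nontrivially. -/
def IsEssentialSub {M : Type v} [AddCommGroup M] [Module R M] (L : Submodule R M) : Prop :=
  ∀ K : Submodule R M, K ≠ ⊥ → L ⊓ K ≠ ⊥

/-- A module is singular if it is isomorphic to `N ⧸ L` for some module `N` and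
essential submodule `L ≤ N`. -/
def IsSingular (M : Type v) [AddCommGroup M] [Module R M] : Prop :=
  ∃ (N : Type v) (_ : AddCommGroup N) (_ : Module R N) (L : Submodule R N),
    IsEssentialSub R L ∧ Nonempty ((N ⧸ L) ≃ₗ[R] M)

variable {M : Type v} [AddCommGroup M] [Module R M]

/-- `N` is small in `M`: `N + Z ≠ M` for every proper submodule `Z`. -/
def SmallSub (N : Submodule R M) : Prop :=
  ∀ Z : Submodule R M, Z ≠ ⊤ → N ⊔ Z ≠ ⊤

/-- `N` is δ-small in `M`: `N + Z ≠ M` for every proper submodule `Z` with `M ⧸ Z` singular. -/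
def DeltaSmall (N : Submodule R M) : Prop :=
  ∀ Z : Submodule R M, Z ≠ ⊤ → IsSingular R (M ⧸ Z) → N ⊔ Z ≠ ⊤

/-- `δ(M)`: the sum of all δ-small submodules of `M`. -/
def deltaRad : Submodule R M := sSup {N : Submodule R M | DeltaSmall R N}

/-- The radical: intersection of all maximal submodules. -/
def radM : Submodule R M := sInf {K : Submodule R M | IsCoatom K}

/-- The socle: sum of all simple submodules. -/
def socM : Submodule R M := sSup {S : Submodule R M | IsAtom S}

/-- `N` is a δ-supplement of `K` in `M`: `N + K = M` and `N ∩ K` is δ-small in `N`. -/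
def IsDeltaSupplement (N K : Submodule R M) : Prop :=
  N ⊔ K = ⊤ ∧ DeltaSmall R ((N ⊓ K).comap N.subtype)

/-- `N` is a δ-supplement submodule of `M`. -/
def IsDeltaSupplementSub (N : Submodule R M) : Prop :=
  ∃ K : Submodule R M, IsDeltaSupplement R N K

/-- `N` is a supplement of `K` in `M`: `N + K = M` and `N ∩ K` is small in `N`. -/
def IsSupplement (N K : Submodule R M) : Prop :=
  N ⊔ K = ⊤ ∧ SmallSub R ((N ⊓ K).comap N.subtype)

/-- `M` is δ-supplemented: every submodule has a δ-supplement. -/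
def DeltaSupplemented (M : Type v) [AddCommGroup M] [Module R M] : Prop :=
  ∀ L : Submodule R M, ∃ N : Submodule R M, IsDeltaSupplement R N L

/-- `M` is supplemented: every submodule has a supplement. -/
def Supplemented (M : Type v) [AddCommGroup M] [Module R M] : Prop :=
  ∀ L : Submodule R M, ∃ N : Submodule R M, IsSupplement R N L

/-- `N` is δ-coclosed in `M`: if `X ≤ N`, `N/X` is singular and `N/X ≪_δ M/X`, then `X = N`. -/
def DeltaCoclosed (N : Submodule R M) : Prop :=
  ∀ X : Submodule R M, X ≤ N →
    IsSingular R ↥(N.map X.mkQ) → DeltaSmall R (N.map X.mkQ) → X = N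

/-- `N` is coclosed in `M`: if `X ≤ N` and `N/X ≪ M/X`, then `X = N`. -/
def Coclosed (N : Submodule R M) : Prop :=
  ∀ X : Submodule R M, X ≤ N → SmallSub R (N.map X.mkQ) → X = N

/-- A module is local if it has a largest proper submodule. -/
def LocalModule (M : Type v) [AddCommGroup M] [Module R M] : Prop :=
  ∃ L : Submodule R M, L ≠ ⊤ ∧ ∀ K : Submodule R M, K ≠ ⊤ → K ≤ L

/-- `M` is δ-local if `δ(M)` is δ-small in `M` and `δ(M)` is a maximal submodule. -/
def DeltaLocal (M : Type v) [AddCommGroup M] [Module R M] : Prop :=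
  DeltaSmall R (deltaRad R : Submodule R M) ∧ IsCoatom (deltaRad R : Submodule R M)

end Defs
section Helpers

universe u v

variable {R : Type u} [Ring R]

lemma isSingular_congr {M₁ M₂ : Type v} [AddCommGroup M₁] [Module R M₁] [AddCommGroup M₂]
    [Module R M₂] (e : M₁ ≃ₗ[R] M₂) (h : IsSingular R M₁) : IsSingular R M₂ := by
  obtain ⟨N, i1, i2, L, hL, ⟨f⟩⟩ := h
  exact ⟨N, i1, i2, L, hL, ⟨f.trans e⟩⟩

variable {M : Type v} [AddCommGroup M] [Module R M]

lemma essential_mono {L S : Submodule R M} (h : L ≤ S) (hL : IsEssentialSub R L) :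
    IsEssentialSub R S := by
  intro K hK hc
  exact hL K hK (le_bot_iff.mp (hc ▸ inf_le_inf_right K h))

lemma deltaSmall_bot : DeltaSmall R (⊥ : Submodule R M) := by
  intro Z hZ _ h
  exact hZ (by simpa using h)

lemma deltaSmall_of_subsingleton {M' : Type v} [AddCommGroup M'] [Module R M'] [Subsingleton M']
    (A : Submodule R M') : DeltaSmall R A := by
  intro Z hZ _ _
  exact hZ (eq_top_iff.mpr fun x _ => Subsingleton.elim (0 : M') x ▸ Z.zero_mem)

lemma deltaSmall_mono {A B : Submodule R M} (h : A ≤ B) (hB : DeltaSmall R B) :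
    DeltaSmall R A := by
  intro Z hZ hs hA
  exact hB Z hZ hs (top_unique (hA ▸ sup_le_sup_right h Z))

lemma isSingular_quot_mono {Z W : Submodule R M} (hZW : Z ≤ W) (h : IsSingular R (M ⧸ Z)) :
    IsSingular R (M ⧸ W) := by
  obtain ⟨N, i1, i2, L, hL, ⟨e⟩⟩ := h
  let W₁ : Submodule R (N ⧸ L) := (W.map Z.mkQ).comap (e : (N ⧸ L) →ₗ[R] (M ⧸ Z))
  let S : Submodule R N := W₁.comap L.mkQ
  have hLS : L ≤ S := by
    intro x hx
    show L.mkQ x ∈ W₁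
    rw [Submodule.mkQ_apply, (Submodule.Quotient.mk_eq_zero L).mpr hx]
    exact W₁.zero_mem
  have hmap1 : S.map L.mkQ = W₁ := Submodule.map_comap_eq_of_surjective (Submodule.mkQ_surjective L) W₁
  have hmap2 : W₁.map (e : (N ⧸ L) →ₗ[R] (M ⧸ Z)) = W.map Z.mkQ := by
    show Submodule.map (e : (N ⧸ L) →ₗ[R] (M ⧸ Z)) (Submodule.comap (e : (N ⧸ L) →ₗ[R] (M ⧸ Z)) _) = _
    rw [Submodule.map_comap_eq, LinearEquiv.range, top_inf_eq]
  have efinal : (N ⧸ S) ≃ₗ[R] (M ⧸ W) :=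
    ((Submodule.quotientQuotientEquivQuotient L S hLS).symm.trans
      ((Submodule.quotEquivOfEq _ _ hmap1).trans
        ((Submodule.Quotient.equiv W₁ (W₁.map (e : (N ⧸ L) →ₗ[R] (M ⧸ Z))) e rfl).trans
          ((Submodule.quotEquivOfEq _ _ hmap2).trans
            (Submodule.quotientQuotientEquivQuotient Z W hZW)))))
  exact ⟨N, i1, i2, S, essential_mono hLS hL, ⟨efinal⟩⟩

lemma deltaSmall_sup {A B : Submodule R M} (hA : DeltaSmall R A) (hB : DeltaSmall R B) :
    DeltaSmall R (A ⊔ B) := by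
  intro Z hZ hs h
  exact hA (B ⊔ Z) (hB Z hZ hs) (isSingular_quot_mono le_sup_right hs)
    (by rw [← sup_assoc]; exact h)

lemma deltaSmall_congr {M₁ M₂ : Type v} [AddCommGroup M₁] [Module R M₁] [AddCommGroup M₂]
    [Module R M₂] (e : M₁ ≃ₗ[R] M₂) {A : Submodule R M₁} (hA : DeltaSmall R A) :
    DeltaSmall R (A.map (e : M₁ →ₗ[R] M₂)) := by
  intro Z hZ hs h
  have hmapcomap : (Z.comap (e : M₁ →ₗ[R] M₂)).map (e : M₁ →ₗ[R] M₂) = Z := by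
    rw [Submodule.map_comap_eq, LinearEquiv.range, top_inf_eq]
  refine hA (Z.comap (e : M₁ →ₗ[R] M₂)) ?_ ?_ ?_
  · intro hc
    apply hZ
    rw [← hmapcomap, hc, Submodule.map_top, LinearEquiv.range]
  · exact isSingular_congr (Submodule.Quotient.equiv _ Z e hmapcomap).symm hs
  · apply Submodule.map_injective_of_injective (f := (e : M₁ →ₗ[R] M₂)) e.injective
    rw [Submodule.map_sup, hmapcomap, h, Submodule.map_top, LinearEquiv.range]

lemma quot_sup_top {N K : Submodule R M} (h : N ⊔ K = ⊤) :
    Nonempty ((↥N ⧸ (N ⊓ K).comap N.subtype) ≃ₗ[R] (M ⧸ K)) := by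
  set e₂ : ↥(N ⊔ K) ≃ₗ[R] M := (LinearEquiv.ofEq _ _ h).trans Submodule.topEquiv with he₂def
  have he₂ : ∀ x : ↥(N ⊔ K), (e₂ x : M) = ↑x := fun x => by rw [he₂def]; rfl
  have hmap : (K.comap (N ⊔ K).subtype).map (e₂ : ↥(N ⊔ K) →ₗ[R] M) = K := by
    ext y
    simp only [Submodule.mem_map, Submodule.mem_comap]
    constructor
    · rintro ⟨x, hx, rfl⟩
      simpa [he₂ x] using hx
    · intro hy
      exact ⟨⟨y, h ▸ Submodule.mem_top⟩, hy, he₂ _⟩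
  exact ⟨(LinearMap.quotientInfEquivSupQuotient N K).trans
    (Submodule.Quotient.equiv _ K e₂ hmap)⟩

lemma deltaSmall_of_comap_subtype {A N : Submodule R M} (hAN : A ≤ N)
    (h : DeltaSmall R (A.comap N.subtype)) : DeltaSmall R A := by
  intro Z hZ hs hAZ
  have hNZ : N ⊔ Z = ⊤ := top_unique (hAZ ▸ sup_le_sup_right hAN Z)
  set Z' := (N ⊓ Z).comap N.subtype with hZ'def
  have hZ' : Z' ≠ ⊤ := by
    intro hc
    apply hZ
    have hNle : N ≤ Z := by
      intro x hx
      have : (⟨x, hx⟩ : ↥N) ∈ Z' := hc ▸ Submodule.mem_top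
      exact this.2
    exact top_unique (hAZ ▸ sup_le (hAN.trans hNle) le_rfl)
  have hsup : A.comap N.subtype ⊔ Z' = ⊤ := by
    apply Submodule.map_injective_of_injective N.injective_subtype
    rw [Submodule.map_sup, Submodule.map_comap_subtype, Submodule.map_comap_subtype,
      Submodule.map_top, Submodule.range_subtype]
    rw [inf_eq_right.mpr hAN, inf_eq_right.mpr inf_le_left, inf_comm N Z,
      ← sup_inf_assoc_of_le _ hAN, hAZ, top_inf_eq]
  have hsing : IsSingular R (↥N ⧸ Z') := by
    obtain ⟨e⟩ := quot_sup_top hNZ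
    exact isSingular_congr e.symm hs
  exact h Z' hZ' hsing hsup

lemma deltaSmall_map_of_injective {M₂ : Type v} [AddCommGroup M₂] [Module R M₂]
    (f : M →ₗ[R] M₂) (hf : Function.Injective f) {A B : Submodule R M} (hAB : A ≤ B)
    (h : DeltaSmall R (A.comap B.subtype)) :
    DeltaSmall R ((A.map f).comap (B.map f).subtype) := by
  have hmap : (A.comap B.subtype).map ((Submodule.equivMapOfInjective f hf B : ↥B →ₗ[R] ↥(B.map f))) =
      (A.map f).comap (B.map f).subtype := by
    ext z
    simp only [Submodule.mem_map, Submodule.mem_comap, Submodule.subtype_apply,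
      LinearEquiv.coe_coe, Submodule.coe_equivMapOfInjective_apply]
    constructor
    · rintro ⟨x, hx, rfl⟩
      exact ⟨↑x, hx, (Submodule.coe_equivMapOfInjective_apply f hf B x).symm⟩
    · rintro ⟨a, ha, haz⟩
      refine ⟨⟨a, hAB ha⟩, ha, Subtype.ext ?_⟩
      rw [Submodule.coe_equivMapOfInjective_apply]
      exact haz
  exact hmap ▸ deltaSmall_congr (Submodule.equivMapOfInjective f hf B) h

lemma deltaSmall_in_of_le {A X W : Submodule R M} (hAX : A ≤ X) (hXW : X ≤ W)
    (h : DeltaSmall R (A.comap X.subtype)) : DeltaSmall R (A.comap W.subtype) := by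
  apply deltaSmall_of_comap_subtype (N := X.comap W.subtype)
    (fun z hz => Submodule.mem_comap.mpr (hAX hz))
  have hmap : (A.comap X.subtype).map
        (((Submodule.comapSubtypeEquivOfLe hXW).symm : ↥X →ₗ[R] ↥(X.comap W.subtype))) =
      (A.comap W.subtype).comap (X.comap W.subtype).subtype := by
    ext z
    simp only [Submodule.mem_map, Submodule.mem_comap, Submodule.subtype_apply,
      LinearEquiv.coe_coe, Submodule.comapSubtypeEquivOfLe_symm_apply]
    constructor
    · rintro ⟨x, hx, rfl⟩
      exact hx
    · intro hz
      exact ⟨⟨↑↑z, z.2⟩, hz, by apply Subtype.ext; apply Subtype.ext; rfl⟩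
  exact hmap ▸ deltaSmall_congr (Submodule.comapSubtypeEquivOfLe hXW).symm h

lemma exists_compl_of_deltaSmall {A Z : Submodule R M} (hA : DeltaSmall R A)
    (h : A ⊔ Z = ⊤) : ∃ Y : Submodule R M, Z ⊓ Y = ⊥ ∧ Z ⊔ Y = ⊤ := by
  have hzorn : ∀ c ⊆ {Y : Submodule R M | Z ⊓ Y = ⊥}, IsChain (· ≤ ·) c →
      ∀ y ∈ c, ∃ ub ∈ {Y : Submodule R M | Z ⊓ Y = ⊥}, ∀ z ∈ c, z ≤ ub := by
    intro c hc hchain y hy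
    refine ⟨sSup c, ?_, fun z hz => le_sSup hz⟩
    rw [Set.mem_setOf_eq, eq_bot_iff]
    intro x hx
    rw [Submodule.mem_inf] at hx
    obtain ⟨hxZ, hxS⟩ := hx
    rw [Submodule.mem_sSup_of_directed ⟨y, hy⟩ hchain.directedOn] at hxS
    obtain ⟨W, hWc, hxW⟩ := hxS
    have hxZW : x ∈ Z ⊓ W := ⟨hxZ, hxW⟩
    rw [hc hWc] at hxZW
    exact hxZW
  obtain ⟨Y, -, hY⟩ := zorn_le_nonempty₀ {Y : Submodule R M | Z ⊓ Y = ⊥} hzorn ⊥ (by simp)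
  have hYZ : Z ⊓ Y = ⊥ := hY.prop
  have hess : IsEssentialSub R (Z ⊔ Y) := by
    intro K hK hc
    have h1 : Z ⊓ (Y ⊔ K) = ⊥ := by
      rw [eq_bot_iff]
      intro z hz
      rw [Submodule.mem_inf] at hz
      obtain ⟨hzZ, hzYK⟩ := hz
      rw [Submodule.mem_sup] at hzYK
      obtain ⟨y, hy, k, hk, rfl⟩ := hzYK
      have hkmem : k ∈ (Z ⊔ Y) ⊓ K :=
        ⟨by simpa using sub_mem (Submodule.mem_sup_left hzZ) (Submodule.mem_sup_right hy), hk⟩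
      rw [hc] at hkmem
      rw [(Submodule.mem_bot R).mp hkmem, add_zero] at hzZ ⊢
      have : y ∈ Z ⊓ Y := ⟨hzZ, hy⟩
      rw [hYZ] at this
      exact this
    have hKY : K ≤ Y := le_sup_right.trans (hY.2 h1 le_sup_left)
    apply hK
    rw [eq_bot_iff, ← hc]
    exact le_inf (hKY.trans le_sup_right) le_rfl
  by_cases htop : Z ⊔ Y = ⊤
  · exact ⟨Y, hYZ, htop⟩
  · exfalso
    have hsing : IsSingular R (M ⧸ (Z ⊔ Y)) :=
      ⟨M, inferInstance, inferInstance, Z ⊔ Y, hess, ⟨LinearEquiv.refl R _⟩⟩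
    exact hA (Z ⊔ Y) htop hsing (top_unique (h ▸ sup_le_sup_left le_sup_left A))

end Helpers
section Helpers2

universe u v

variable {R : Type u} [Ring R] {M : Type v} [AddCommGroup M] [Module R M]

lemma subsingleton_bot : Subsingleton ↥(⊥ : Submodule R M) :=
  ⟨fun a b => Subtype.ext (by
    rw [(Submodule.mem_bot R).mp a.2, (Submodule.mem_bot R).mp b.2])⟩

lemma deltaSmall_comap_top {L : Submodule R M} (h : DeltaSmall R L) :
    DeltaSmall R (L.comap (⊤ : Submodule R M).subtype) := by
  have hmap : L.map ((Submodule.topEquiv (R := R) (M := M)).symm : M →ₗ[R] ↥(⊤ : Submodule R M)) =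
      L.comap (⊤ : Submodule R M).subtype := by
    ext x
    simp only [Submodule.mem_map, Submodule.mem_comap, Submodule.subtype_apply,
      LinearEquiv.coe_coe]
    constructor
    · rintro ⟨y, hy, rfl⟩
      simpa using hy
    · intro hx
      exact ⟨↑x, hx, by apply Subtype.ext; simp⟩
  exact hmap ▸ deltaSmall_congr (Submodule.topEquiv (R := R) (M := M)).symm h

lemma deltaSupplemented_of_isSimpleModule (h : IsSimpleModule R M) :
    DeltaSupplemented R M := by
  intro L
  haveI := h
  rcases eq_bot_or_eq_top L with rfl | rfl
  · refine ⟨⊤, by simp, ?_⟩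
    rw [inf_bot_eq]
    exact deltaSmall_comap_top deltaSmall_bot
  · refine ⟨⊥, by simp, ?_⟩
    haveI : Subsingleton ↥(⊥ : Submodule R M) := subsingleton_bot
    exact deltaSmall_of_subsingleton _

lemma deltaSupplemented_of_deltaLocal (h : DeltaLocal R M) :
    DeltaSupplemented R M := by
  intro L
  by_cases hL : L ≤ (deltaRad R : Submodule R M)
  · refine ⟨⊤, by simp, ?_⟩
    rw [top_inf_eq]
    exact deltaSmall_comap_top (deltaSmall_mono hL h.1)
  · have hsup : (deltaRad R : Submodule R M) ⊔ L = ⊤ := by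
      apply h.2.2
      refine lt_of_le_of_ne le_sup_left fun hc => hL ?_
      rw [hc]
      exact le_sup_right
    obtain ⟨Y, hYL, hYt⟩ := exists_compl_of_deltaSmall h.1 hsup
    refine ⟨Y, by rwa [sup_comm], ?_⟩
    have hinf : Y ⊓ L = ⊥ := by rwa [inf_comm]
    rw [hinf, Submodule.comap_bot, Submodule.ker_subtype]
    exact deltaSmall_bot

/-- Internal δ-supplementedness, phrased with submodules of the ambient module. -/
def DSuppIn (N : Submodule R M) : Prop :=
  ∀ C : Submodule R M, C ≤ N →
    ∃ Y : Submodule R M, Y ≤ N ∧ Y ⊔ C = N ∧ DeltaSmall R ((Y ⊓ C).comap Y.subtype)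

lemma dsuppIn_of_deltaSupplemented {N : Submodule R M} (h : DeltaSupplemented R ↥N) :
    DSuppIn N := by
  intro C hC
  obtain ⟨Y', hY'sup, hY'small⟩ := h (C.comap N.subtype)
  refine ⟨Y'.map N.subtype, Submodule.map_subtype_le N Y', ?_, ?_⟩
  · have hmap := congrArg (Submodule.map N.subtype) hY'sup
    rw [Submodule.map_sup, Submodule.map_comap_subtype, Submodule.map_top,
      Submodule.range_subtype, inf_eq_right.mpr hC] at hmap
    exact hmap
  · have h2 := deltaSmall_map_of_injective N.subtype N.injective_subtype
      (inf_le_left : Y' ⊓ C.comap N.subtype ≤ Y') hY'small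
    have h3 : (Y' ⊓ C.comap N.subtype).map N.subtype = (Y'.map N.subtype) ⊓ C := by
      rw [Submodule.map_inf _ N.injective_subtype, Submodule.map_comap_subtype,
        inf_eq_right.mpr hC]
    rwa [h3] at h2

lemma dsupp_step {N L : Submodule R M} (hN : DSuppIn N)
    (h : ∃ X, IsDeltaSupplement R X (N ⊔ L)) : ∃ W, IsDeltaSupplement R W L := by
  obtain ⟨X, hX1, hX2⟩ := h
  obtain ⟨Y, hYN, hY1, hY2⟩ := hN ((X ⊔ L) ⊓ N) inf_le_right
  have hNle : N ≤ (X ⊔ Y) ⊔ L := by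
    rw [← hY1]
    refine sup_le (le_sup_right.trans le_sup_left) ?_
    exact inf_le_left.trans (sup_le (le_sup_left.trans le_sup_left) le_sup_right)
  refine ⟨X ⊔ Y, ?_, ?_⟩
  · apply top_unique
    rw [← hX1]
    exact sup_le (le_sup_left.trans le_sup_left) (sup_le hNle le_sup_right)
  · have h1 : DeltaSmall R ((X ⊓ (N ⊔ L)).comap (X ⊔ Y).subtype) :=
      deltaSmall_in_of_le inf_le_left le_sup_left hX2
    have h2 : DeltaSmall R ((Y ⊓ ((X ⊔ L) ⊓ N)).comap (X ⊔ Y).subtype) :=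
      deltaSmall_in_of_le inf_le_left le_sup_right hY2
    have hsub : (X ⊔ Y) ⊓ L ≤ (X ⊓ (N ⊔ L)) ⊔ (Y ⊓ ((X ⊔ L) ⊓ N)) := by
      intro z hz
      rw [Submodule.mem_inf] at hz
      obtain ⟨hzW, hzL⟩ := hz
      rw [Submodule.mem_sup] at hzW
      obtain ⟨x, hx, y, hy, rfl⟩ := hzW
      have hx' : x ∈ X ⊓ (N ⊔ L) := by
        refine Submodule.mem_inf.mpr ⟨hx, ?_⟩
        have hxy : (x + y) - y ∈ N ⊔ L :=
          sub_mem (Submodule.mem_sup_right hzL) (Submodule.mem_sup_left (hYN hy))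
        simpa using hxy
      have hy' : y ∈ Y ⊓ ((X ⊔ L) ⊓ N) := by
        refine Submodule.mem_inf.mpr ⟨hy, Submodule.mem_inf.mpr ⟨?_, hYN hy⟩⟩
        have hxy : (x + y) - x ∈ X ⊔ L :=
          sub_mem (Submodule.mem_sup_right hzL) (Submodule.mem_sup_left hx)
        simpa using hxy
      exact Submodule.add_mem_sup hx' hy'
    have hle : ((X ⊔ Y) ⊓ L).comap (X ⊔ Y).subtype ≤
        (X ⊓ (N ⊔ L)).comap (X ⊔ Y).subtype ⊔ (Y ⊓ ((X ⊔ L) ⊓ N)).comap (X ⊔ Y).subtype := by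
      intro z hz
      have hz' := hsub (Submodule.mem_comap.mp hz)
      rw [Submodule.mem_sup] at hz'
      obtain ⟨a, ha, b, hb, hab⟩ := hz'
      refine Submodule.mem_sup.mpr
        ⟨⟨a, Submodule.mem_sup_left (Submodule.mem_inf.mp ha).1⟩, Submodule.mem_comap.mpr ha,
         ⟨b, Submodule.mem_sup_right (Submodule.mem_inf.mp hb).1⟩, Submodule.mem_comap.mpr hb,
         Subtype.ext hab⟩
    exact deltaSmall_mono hle (deltaSmall_sup h1 h2)

lemma le_foldr_sup : ∀ (l : List (Submodule R M)) (x : Submodule R M), x ∈ l →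
    x ≤ l.foldr (· ⊔ ·) ⊥ := by
  intro l
  induction l with
  | nil => intro x hx; exact absurd hx List.not_mem_nil
  | cons a l ih =>
    intro x hx
    rcases List.mem_cons.mp hx with rfl | h
    · exact le_sup_left
    · exact (ih x h).trans le_sup_right

lemma dsupp_list : ∀ (l : List (Submodule R M)), (∀ N ∈ l, DSuppIn N) →
    ∀ L : Submodule R M, (∃ X, IsDeltaSupplement R X (l.foldr (· ⊔ ·) ⊥ ⊔ L)) →
    ∃ X, IsDeltaSupplement R X L := by
  intro l
  induction l with
  | nil => intro _ L h; simpa using h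
  | cons N l ih =>
    intro hl L h
    rw [List.foldr_cons, sup_assoc] at h
    exact ih (fun N' hN' => hl N' (List.mem_cons_of_mem _ hN')) L
      (dsupp_step (hl N (List.mem_cons_self)) h)

lemma exists_good_of_coatom {K N : Submodule R M} (hK : IsCoatom K)
    (hN : IsDeltaSupplement R N K) :
    ∃ H : Submodule R M, (IsSimpleModule R ↥H ∨ DeltaLocal R ↥H) ∧ H ⊔ K = ⊤ := by
  obtain ⟨hNK, hA⟩ := hN
  set A : Submodule R ↥N := (N ⊓ K).comap N.subtype with hAdef
  obtain ⟨e⟩ := quot_sup_top hNK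
  haveI hsimpleQ : IsSimpleModule R (↥N ⧸ A) := by
    haveI : IsSimpleModule R (M ⧸ K) := isSimpleModule_iff_isCoatom.mpr hK
    exact IsSimpleModule.congr e
  have hAco : IsCoatom A := isSimpleModule_iff_isCoatom.mp hsimpleQ
  by_cases hδ : (deltaRad R : Submodule R ↥N) = ⊤
  · have hex : ∃ S : Submodule R ↥N, DeltaSmall R S ∧ ¬S ≤ A := by
      by_contra hall
      push_neg at hall
      exact hAco.1 (top_le_iff.mp (hδ ▸ sSup_le fun S hS => hall S hS))
    obtain ⟨S, hS, hSA⟩ := hex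
    have hSAt : S ⊔ A = ⊤ := by
      apply hAco.2
      refine lt_of_le_of_ne le_sup_right fun hc => hSA ?_
      rw [hc]
      exact le_sup_left
    obtain ⟨Y, hYA, hYt⟩ := exists_compl_of_deltaSmall hS hSAt
    have hcompl : IsCompl A Y := ⟨disjoint_iff.mpr hYA, codisjoint_iff.mpr hYt⟩
    haveI hsY : IsSimpleModule R ↥Y :=
      IsSimpleModule.congr (Submodule.quotientEquivOfIsCompl A Y hcompl).symm
    refine ⟨Y.map N.subtype, Or.inl ?_, ?_⟩
    · exact IsSimpleModule.congr
        (Submodule.equivMapOfInjective N.subtype N.injective_subtype Y).symm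
    · have h1 : (N ⊓ K) ⊔ Y.map N.subtype = N := by
        have hmap := congrArg (Submodule.map N.subtype) hYt
        rw [Submodule.map_sup, Submodule.map_comap_subtype, Submodule.map_top,
          Submodule.range_subtype, inf_eq_right.mpr (inf_le_left : N ⊓ K ≤ N)] at hmap
        exact hmap
      apply top_unique
      calc ⊤ = N ⊔ K := hNK.symm
        _ = ((N ⊓ K) ⊔ Y.map N.subtype) ⊔ K := by rw [h1]
        _ ≤ Y.map N.subtype ⊔ K :=
            sup_le (sup_le (inf_le_right.trans le_sup_right) le_sup_left) le_sup_right
  · have hAδ : A ≤ (deltaRad R : Submodule R ↥N) := le_sSup hA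
    have heq : (deltaRad R : Submodule R ↥N) = A := by
      rcases hAδ.lt_or_eq with hlt | heq
      · exact absurd (hAco.2 _ hlt) hδ
      · exact heq.symm
    exact ⟨N, Or.inr ⟨by rw [heq]; exact hA, by rw [heq]; exact hAco⟩, hNK⟩

end Helpers2
theorem fg_deltaSupplemented_tfae {R : Type*} [Ring R] (M : Type*) [AddCommGroup M]
    [Module R M] [Module.Finite R M] :
    List.TFAE [
      DeltaSupplemented R M,
      ∀ K : Submodule R M, IsCoatom K → ∃ N : Submodule R M, IsDeltaSupplement R N K,
      ∃ (n : ℕ) (H : Fin n → Submodule R M), (⨆ i, H i) = ⊤ ∧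
        ∀ i, IsSimpleModule R (H i) ∨ DeltaLocal R (H i)] := by
  have hcomp : IsCompactElement (⊤ : Submodule R M) :=
    (Submodule.fg_iff_compact ⊤).mp (Module.Finite.fg_top (R := R) (M := M))
  tfae_have 1 → 2 := by
    intro h K _
    exact h K
  tfae_have 2 → 3 := by
    intro h2
    set S : Set (Submodule R M) := {H | IsSimpleModule R ↥H ∨ DeltaLocal R ↥H} with hSdef
    have hsSup : sSup S = ⊤ := by
      by_contra hne
      haveI : IsCoatomic (Submodule R M) := CompleteLattice.coatomic_of_top_compact hcomp
      obtain h | ⟨K, hK, hle⟩ := eq_top_or_exists_le_coatom (sSup S)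
      · exact hne h
      · obtain ⟨N, hN⟩ := h2 K hK
        obtain ⟨H, hHS, hHK⟩ := exists_good_of_coatom hK hN
        have hHle : H ≤ K := (le_sSup (show H ∈ S from hHS)).trans hle
        exact hK.1 (by rw [← hHK, sup_eq_right.mpr hHle])
    obtain ⟨t, htS, htsup⟩ := (CompleteLattice.isCompactElement_iff_exists_le_sSup_of_le_sSup _ _).mp hcomp S (by rw [hsSup])
    refine ⟨t.card, fun i => (t.equivFin.symm i : Submodule R M), ?_, ?_⟩
    · refine le_antisymm le_top ?_
      refine htsup.trans (Finset.sup_le fun b hb => le_iSup_of_le (t.equivFin ⟨b, hb⟩) ?_)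
      simp
    · intro i
      exact htS (t.equivFin.symm i).2
  tfae_have 3 → 1 := by
    rintro ⟨n, H, hsup, hprop⟩
    intro L
    have hl : ∀ N ∈ List.ofFn H, DSuppIn N := by
      intro N hN
      rw [List.mem_ofFn] at hN
      obtain ⟨i, rfl⟩ := hN
      rcases hprop i with hsimple | hlocal
      · exact dsuppIn_of_deltaSupplemented (deltaSupplemented_of_isSimpleModule hsimple)
      · exact dsuppIn_of_deltaSupplemented (deltaSupplemented_of_deltaLocal hlocal)
    have hfold : (List.ofFn H).foldr (· ⊔ ·) ⊥ = ⊤ := by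
      apply top_unique
      rw [← hsup]
      exact iSup_le fun i => le_foldr_sup _ _ ((List.mem_ofFn (f := H) (a := H i)).mpr ⟨i, rfl⟩)
    apply dsupp_list (List.ofFn H) hl L
    refine ⟨⊥, by simp [hfold], ?_⟩
    haveI : Subsingleton ↥(⊥ : Submodule R M) := subsingleton_bot
    exact deltaSmall_of_subsingleton _
  tfae_finish
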